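/- The uniformity induced on tight probability measures on ℝ by the family of pseudometrics (μ, ν) ↦ |∫ f dμ − ∫ f dν| over all bounded continuous functions f (the Cb(ℝ)-weak uniformity) does not satisfy the following property: whenever x_j, y_j are real sequences with |x_j − y_j| → 0, the point masses δ(x_j) asymptotically approximate δ(y_j), i.e., for every bounded continuous f, ∫ f dδ(x_j) − ∫ f dδ(y_j) → 0. Concretely: there exists a bounded continuous function f on ℝ such that f(j) − f(j + 1/j) = 1 for all j ≥ 1. -/

import Mathlib

open Filter Set

/-- Piece of the sought function on the interval `[n, n+1]` for `n ≥ 2`: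
a tent dipping from `1/2` at `n` down to `-1/2` at `n + 1/n` and back to `1/2` at `n+1`. -/
noncomputable def cbF (n : ℤ) (x : ℝ) : ℝ :=
  1/2 - max 0 (min ((n : ℝ) * (x - n)) ((n : ℝ) * ((n : ℝ) + 1 - x) / ((n : ℝ) - 1)))

lemma cbF_continuous (n : ℤ) : Continuous (cbF n) := by
  unfold cbF; fun_prop

/-- The sought bounded continuous function. -/
noncomputable def cbf (x : ℝ) : ℝ :=
  if x ≤ 2 then min (3/2) (5/2 - x) else cbF ⌊x⌋ x

lemma cbF_self {n : ℤ} (hn : 2 ≤ n) : cbF n (n : ℝ) = 1/2 := by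
  have h1 : (1:ℝ) ≤ (n:ℝ) - 1 := by
    have : (2:ℝ) ≤ (n:ℝ) := by exact_mod_cast hn
    linarith
  have hpos : 0 ≤ (n : ℝ) * ((n : ℝ) + 1 - (n:ℝ)) / ((n : ℝ) - 1) := by
    apply div_nonneg
    · nlinarith
    · linarith
  simp only [cbF, sub_self, mul_zero]
  rw [min_eq_left hpos, max_self]
  ring

lemma cbF_succ {n : ℤ} (hn : 0 ≤ n) : cbF n ((n : ℝ) + 1) = 1/2 := by
  have h0 : (0:ℝ) ≤ (n:ℝ) := by exact_mod_cast hn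
  have : ((n:ℝ) + 1 - ((n:ℝ)+1)) = 0 := by ring
  simp only [cbF, this, mul_zero, zero_div]
  rw [min_eq_right (by nlinarith : (0:ℝ) ≤ (n:ℝ) * ((n:ℝ)+1 - (n:ℝ)))]
  simp

lemma cbF_dip {n : ℤ} (hn : 2 ≤ n) : cbF n ((n : ℝ) + 1/(n:ℝ)) = -(1/2) := by
  have h2 : (2:ℝ) ≤ (n:ℝ) := by exact_mod_cast hn
  have hne : (n:ℝ) ≠ 0 := by linarith
  have hne1 : (n:ℝ) - 1 ≠ 0 := by linarith
  have e1 : (n:ℝ) * ((n:ℝ) + 1/(n:ℝ) - (n:ℝ)) = 1 := by field_simp; ring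
  have e2 : (n:ℝ) * ((n:ℝ) + 1 - ((n:ℝ) + 1/(n:ℝ))) / ((n:ℝ) - 1) = 1 := by
    field_simp; ring
  simp only [cbF, e1, e2, min_self]
  norm_num

lemma cbf_eq_left {y : ℝ} (h : y ≤ 2) : cbf y = min (3/2) (5/2 - y) := by
  simp [cbf, h]

lemma cbf_eq_F {m : ℤ} {y : ℝ} (h2 : 2 < y) (h : ⌊y⌋ = m) : cbf y = cbF m y := by
  simp [cbf, not_le.mpr h2, h]

lemma cbf_floor_ge {y : ℝ} (h2 : 2 < y) : 2 ≤ ⌊y⌋ := by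
  exact Int.le_floor.mpr (by exact_mod_cast h2.le)

lemma cbf_bound (x : ℝ) : |cbf x| ≤ 3/2 := by
  rw [abs_le]
  by_cases h : x ≤ 2
  · rw [cbf_eq_left h]
    constructor
    · have : (1:ℝ)/2 ≤ 5/2 - x := by linarith
      have := le_min (by norm_num : (1:ℝ)/2 ≤ 3/2) this
      linarith
    · exact min_le_left _ _
  · have h2 : 2 < x := lt_of_not_ge h
    set n := ⌊x⌋ with hn
    have hn2 : 2 ≤ n := cbf_floor_ge h2
    have hn2r : (2:ℝ) ≤ (n:ℝ) := by exact_mod_cast hn2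
    have hfl : (n:ℝ) ≤ x := Int.floor_le x
    have hfu : x < (n:ℝ) + 1 := Int.lt_floor_add_one x
    rw [cbf_eq_F h2 rfl]
    unfold cbF
    have hb : (n:ℝ) * ((n:ℝ) + 1 - x) / ((n:ℝ) - 1) ≤ 2 := by
      rw [div_le_iff₀ (by linarith : (0:ℝ) < (n:ℝ) - 1)]
      nlinarith
    have hmax : max 0 (min ((n : ℝ) * (x - n)) ((n : ℝ) * ((n : ℝ) + 1 - x) / ((n : ℝ) - 1))) ≤ 2 :=
      max_le (by norm_num) (le_trans (min_le_right _ _) hb)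
    have h0 : 0 ≤ max 0 (min ((n : ℝ) * (x - n)) ((n : ℝ) * ((n : ℝ) + 1 - x) / ((n : ℝ) - 1))) :=
      le_max_left _ _
    constructor <;> linarith

lemma cbf_continuous : Continuous cbf := by
  rw [continuous_iff_continuousAt]
  intro x
  rcases lt_trichotomy x 2 with hx | hx | hx
  · -- x < 2 : locally given by the first branch
    have hev : cbf =ᶠ[nhds x] fun y => min (3/2) (5/2 - y) := by
      filter_upwards [Iio_mem_nhds hx] with y hy
      exact cbf_eq_left (le_of_lt hy)
    exact ContinuousAt.congr (by fun_prop) hev.symm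
  · -- x = 2 : glue the two formulas
    subst hx
    have hL : ContinuousWithinAt cbf (Iic (2:ℝ)) 2 := by
      apply ContinuousWithinAt.congr
        ((continuous_const.min (by fun_prop)).continuousWithinAt :
          ContinuousWithinAt (fun y : ℝ => min (3/2) (5/2 - y)) (Iic 2) 2)
      · intro y hy; exact cbf_eq_left hy
      · exact cbf_eq_left le_rfl
    have hR : ContinuousWithinAt cbf (Ici (2:ℝ)) 2 := by
      apply ContinuousWithinAt.mono_of_mem_nhdsWithin _ (Ico_mem_nhdsGE (by norm_num : (2:ℝ) < 3))
      apply ContinuousWithinAt.congr ((cbF_continuous 2).continuousWithinAt)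
      · intro y hy
        rcases eq_or_lt_of_le hy.1 with h | h
        · rw [← h, cbf_eq_left le_rfl]
          norm_num [cbF]
        · refine cbf_eq_F h ?_
          rw [Int.floor_eq_iff]
          exact ⟨by exact_mod_cast hy.1, by exact_mod_cast hy.2⟩
      · rw [cbf_eq_left le_rfl]
        norm_num [cbF]
    rw [← continuousWithinAt_univ, ← Set.Iic_union_Ici (a := (2:ℝ))]
    exact hL.union hR
  · -- x > 2
    set n := ⌊x⌋ with hn
    have hn2 : 2 ≤ n := cbf_floor_ge hx
    have hn2r : (2:ℝ) ≤ (n:ℝ) := by exact_mod_cast hn2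
    have hfl : (n:ℝ) ≤ x := Int.floor_le x
    have hfu : x < (n:ℝ) + 1 := Int.lt_floor_add_one x
    rcases eq_or_lt_of_le hfl with heq | hlt
    · -- x is an integer ≥ 3
      have hn3 : 3 ≤ n := by
        rcases eq_or_lt_of_le hn2 with h | h
        · exfalso; rw [← h] at heq; rw [← heq] at hx; norm_num at hx
        · linarith
      have hn3r : (3:ℝ) ≤ (n:ℝ) := by exact_mod_cast hn3
      have hv1 : cbf x = 1/2 := by
        rw [cbf_eq_F hx hn.symm, ← heq]; exact cbF_self hn2
      have hv2 : cbF (n-1) x = 1/2 := by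
        rw [← heq, show ((n:ℤ):ℝ) = ((n-1:ℤ):ℝ) + 1 by push_cast; ring]
        exact cbF_succ (by omega)
      have hL : ContinuousWithinAt cbf (Iic x) x := by
        apply ContinuousWithinAt.mono_of_mem_nhdsWithin _
          (Ioc_mem_nhdsLE (show (n:ℝ) - 1 < x by rw [← heq]; linarith))
        apply ContinuousWithinAt.congr ((cbF_continuous (n-1)).continuousWithinAt)
        · intro y hy
          rcases eq_or_lt_of_le hy.2 with h | h
          · rw [h, hv1, hv2]
          · have hy2 : 2 < y := by
              have : (n:ℝ) - 1 < y := by rw [← heq] at hy; exact hy.1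
              linarith
            have hyx : y < x := h
            refine cbf_eq_F hy2 ?_
            rw [Int.floor_eq_iff]
            constructor
            · push_cast; rw [← heq] at hy; linarith [hy.1]
            · push_cast; rw [← heq] at hyx; linarith
        · rw [hv1, hv2]
      have hR : ContinuousWithinAt cbf (Ici x) x := by
        apply ContinuousWithinAt.mono_of_mem_nhdsWithin _
          (Ico_mem_nhdsGE (show x < (n:ℝ) + 1 from hfu))
        apply ContinuousWithinAt.congr ((cbF_continuous n).continuousWithinAt)
        · intro y hy
          have hy2 : 2 < y := lt_of_lt_of_le hx hy.1
          refine cbf_eq_F hy2 ?_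
          rw [Int.floor_eq_iff]
          refine ⟨by rw [heq]; exact hy.1, by exact_mod_cast hy.2⟩
        · exact cbf_eq_F hx hn.symm
      rw [← continuousWithinAt_univ, ← Set.Iic_union_Ici (a := x)]
      exact hL.union hR
    · -- x is not an integer: locally given by `cbF n`
      have hmem : Ioo (max 2 (n:ℝ)) ((n:ℝ)+1) ∈ nhds x :=
        Ioo_mem_nhds (max_lt hx hlt) hfu
      have hev : cbf =ᶠ[nhds x] cbF n := by
        filter_upwards [hmem] with y hy
        have hy2 : 2 < y := lt_of_le_of_lt (le_max_left _ _) hy.1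
        refine cbf_eq_F hy2 ?_
        rw [Int.floor_eq_iff]
        exact ⟨le_of_lt (lt_of_le_of_lt (le_max_right _ _) hy.1), by exact_mod_cast hy.2⟩
      exact ContinuousAt.congr ((cbF_continuous n).continuousAt) hev.symm

lemma cbf_nat_val {j : ℕ} (hj : 2 ≤ j) : cbf (j : ℝ) = 1/2 := by
  rcases eq_or_lt_of_le hj with h | h
  · rw [← h]; norm_num [cbf_eq_left]
  · have h3 : 3 ≤ j := h
    have hx : (2:ℝ) < (j:ℝ) := by exact_mod_cast lt_of_lt_of_le (by norm_num : (2:ℕ) < 3) h3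
    rw [cbf_eq_F hx (by exact_mod_cast Int.floor_natCast j)]
    exact_mod_cast cbF_self (by exact_mod_cast hj)

lemma cbf_dip_val {j : ℕ} (hj : 2 ≤ j) : cbf ((j : ℝ) + 1/(j:ℝ)) = -(1/2) := by
  have hjr : (2:ℝ) ≤ (j:ℝ) := by exact_mod_cast hj
  have hpos : (0:ℝ) < 1/(j:ℝ) := by positivity
  have hlt1 : 1/(j:ℝ) < 1 := by
    rw [div_lt_one (by linarith)]; linarith
  have h2 : (2:ℝ) < (j:ℝ) + 1/(j:ℝ) := by linarith
  have hfloor : ⌊(j:ℝ) + 1/(j:ℝ)⌋ = (j:ℤ) := by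
    rw [Int.floor_eq_iff]
    constructor
    · push_cast; linarith
    · push_cast; linarith
  rw [cbf_eq_F h2 hfloor]
  have := cbF_dip (n := (j:ℤ)) (by exact_mod_cast hj)
  simpa using this

theorem cbWeak_fails_A1 :
    (∃ f : ℝ → ℝ, Continuous f ∧ (∃ C, ∀ x, |f x| ≤ C) ∧
      ∀ j : ℕ, 1 ≤ j → f j - f (j + 1 / j) = 1) ∧
    ¬ (∀ x y : ℕ → ℝ,
        Tendsto (fun j => |x j - y j|) atTop (nhds 0) →
        ∀ g : ℝ → ℝ, Continuous g → (∃ C, ∀ t, |g t| ≤ C) →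
          Tendsto (fun j => g (x j) - g (y j)) atTop (nhds 0)) := by
  have key : ∀ j : ℕ, 1 ≤ j → cbf j - cbf ((j:ℝ) + 1 / (j:ℝ)) = 1 := by
    intro j hj
    rcases eq_or_lt_of_le hj with h | h
    · rw [← h]
      norm_num
      rw [cbf_eq_left le_rfl, cbf_eq_left (by norm_num)]
      norm_num
    · have hj2 : 2 ≤ j := h
      rw [cbf_nat_val hj2, cbf_dip_val hj2]
      norm_num
  constructor
  · exact ⟨cbf, cbf_continuous, ⟨3/2, cbf_bound⟩, key⟩
  · intro H
    have habs : Tendsto (fun j : ℕ => |((j:ℝ)+1) - ((j:ℝ)+1 + 1/((j:ℝ)+1))|) atTop (nhds 0) := by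
      have : (fun j : ℕ => |((j:ℝ)+1) - ((j:ℝ)+1 + 1/((j:ℝ)+1))|) =
          fun j : ℕ => 1/((j:ℝ)+1) := by
        funext j
        have : ((j:ℝ)+1) - ((j:ℝ)+1 + 1/((j:ℝ)+1)) = -(1/((j:ℝ)+1)) := by ring
        rw [this, abs_neg, abs_of_nonneg (by positivity)]
      rw [this]
      exact tendsto_one_div_add_atTop_nhds_zero_nat
    have H2 := H (fun j => (j:ℝ)+1) (fun j => (j:ℝ)+1 + 1/((j:ℝ)+1)) habs cbf
      cbf_continuous ⟨3/2, cbf_bound⟩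
    have hone : (fun j : ℕ => cbf ((j:ℝ)+1) - cbf ((j:ℝ)+1 + 1/((j:ℝ)+1))) =
        fun _ : ℕ => (1:ℝ) := by
      funext j
      have := key (j+1) (by omega)
      push_cast at this ⊢
      exact this
    rw [hone] at H2
    have := tendsto_nhds_unique H2 tendsto_const_nhds
    norm_num at this
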